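/- Let k be a field of characteristic zero, λ₀,…,λ_{n-1} distinct in k, m₀,…,m_{n-1} positive integers, and a_{ij} ∈ k given for 0 ≤ j ≤ n-1, 0 ≤ i ≤ m_j - 1. With L_j(x) = ∏_{i≠j}(x-λ_i)^{m_i}/(λ_j-λ_i)^{m_i} and Λ_j the m_j×m_j lower triangular matrix with (i,s)-entry binom(i,s)·L_j^{(i-s)}(λ_j) for s ≤ i and 0 otherwise, define r(x) = ∑_{j=0}^{n-1} X_j Λ_j^{-1} A_j, where X_j is the row vector with entries (x-λ_j)^i L_j(x)/i! for 0 ≤ i ≤ m_j - 1 and A_j is the column vector (a_{0j},…,a_{m_j-1,j})ᵀ. Then r has degree less than ∑ m_i and satisfies r^{(i)}(λ_j) = a_{ij} for all admissible i, j. -/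

import Mathlib

open Polynomial

/-- The Hermite–Lagrange basis polynomial `L_t` associated with the node `λ_t`. -/
noncomputable def Lpoly {k : Type*} [Field k] {n : ℕ}
    (lam : Fin n → k) (m : Fin n → ℕ) (t : Fin n) : Polynomial k :=
  ∏ i ∈ Finset.univ.erase t,
    Polynomial.C (((lam t - lam i) ^ m i)⁻¹) * (X - C (lam i)) ^ m i

/-- The lower triangular matrix `Λ_j` with `(i,s)` entry `binom(i,s) L_j^{(i-s)}(λ_j)`. -/
noncomputable def LamMat {k : Type*} [Field k] {n : ℕ}
    (lam : Fin n → k) (m : Fin n → ℕ) (j : Fin n) : Matrix (Fin (m j)) (Fin (m j)) k :=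
  Matrix.of fun i s =>
    if (s : ℕ) ≤ (i : ℕ) then
      ((i : ℕ).choose s : k) * (Polynomial.derivative^[(i : ℕ) - s] (Lpoly lam m j)).eval (lam j)
    else 0

section Aux

variable {k : Type*} [Field k] {n : ℕ} (lam : Fin n → k) (m : Fin n → ℕ)

lemma Lpoly_eval_self (hlam : Function.Injective lam) (t : Fin n) :
    (Lpoly lam m t).eval (lam t) = 1 := by
  simp only [Lpoly, eval_prod, eval_mul, eval_C, eval_pow, eval_sub, eval_X]
  rw [Finset.prod_congr rfl (fun i hi => ?_), Finset.prod_const_one]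
  have hne : lam t - lam i ≠ 0 :=
    sub_ne_zero.2 fun h => (Finset.mem_erase.mp hi).1 (hlam h).symm
  exact inv_mul_cancel₀ (pow_ne_zero _ hne)

lemma pow_dvd_Lpoly (j t : Fin n) (ht : t ≠ j) :
    (X - C (lam t)) ^ m t ∣ Lpoly lam m j :=
  (dvd_mul_left _ _).trans
    (Finset.dvd_prod_of_mem _ (Finset.mem_erase.mpr ⟨ht, Finset.mem_univ t⟩))

lemma eval_basis_ne (j t : Fin n) (ht : t ≠ j) (c : k) (i : ℕ) {d : ℕ} (hd : d < m t) :
    (derivative^[d] (C c * (X - C (lam j)) ^ i * Lpoly lam m j)).eval (lam t) = 0 := by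
  have hdvd : (X - C (lam t)) ^ m t ∣ C c * (X - C (lam j)) ^ i * Lpoly lam m j :=
    Dvd.dvd.mul_left (pow_dvd_Lpoly lam m j t ht) _
  have h2 := pow_sub_dvd_iterate_derivative_of_pow_dvd d hdvd
  have h1 : (X - C (lam t)) ∣ derivative^[d] (C c * (X - C (lam j)) ^ i * Lpoly lam m j) :=
    (dvd_pow_self _ (Nat.sub_ne_zero_of_lt hd)).trans h2
  exact dvd_iff_isRoot.mp h1

lemma eval_basis_self [CharZero k] (j : Fin n) (i d : ℕ) :
    (derivative^[d] (C ((i.factorial : k)⁻¹) * (X - C (lam j)) ^ i * Lpoly lam m j)).eval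
        (lam j)
      = if i ≤ d then (d.choose i : k) * (derivative^[d - i] (Lpoly lam m j)).eval (lam j)
        else 0 := by
  rw [mul_assoc, iterate_derivative_C_mul, eval_mul, eval_C, iterate_derivative_mul,
    eval_finset_sum]
  rw [Finset.sum_eq_single (d - i)]
  · rcases le_or_gt i d with h | h
    · rw [if_pos h, Nat.sub_sub_self h, iterate_derivative_X_sub_pow_self, eval_smul, eval_mul,
        eval_natCast, nsmul_eq_mul, Nat.choose_symm h]
      have hfac : ((i.factorial : k)) ≠ 0 := Nat.cast_ne_zero.mpr i.factorial_ne_zero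
      field_simp
    · rw [if_neg (not_le.mpr h), Nat.sub_eq_zero_of_le h.le, iterate_derivative_X_sub_pow,
        Nat.sub_zero]
      rw [eval_smul, smul_mul_assoc, eval_smul, eval_mul, eval_pow, eval_sub, eval_X, eval_C,
        sub_self, zero_pow (Nat.sub_ne_zero_of_lt h), zero_mul, smul_zero, smul_zero, mul_zero]
  · intro s hs hne
    rw [iterate_derivative_X_sub_pow, eval_smul, smul_mul_assoc, eval_smul, eval_mul, eval_pow,
      eval_sub, eval_X, eval_C, sub_self]
    have hs' : s ≤ d := Nat.lt_succ_iff.mp (Finset.mem_range.mp hs)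
    rcases Nat.lt_or_ge (d - s) i with hlt | hge
    · rw [zero_pow (Nat.sub_ne_zero_of_lt hlt), zero_mul, smul_zero, smul_zero]
    · rcases Nat.eq_or_lt_of_le hge with he | hlt
      · exact absurd (by omega) hne
      · rw [Nat.descFactorial_eq_zero_iff_lt.mpr hlt, zero_smul, smul_zero]
  · intro h
    exact absurd (Finset.mem_range.mpr (by omega)) h

lemma LamMat_mul_inv [CharZero k] (hlam : Function.Injective lam) (j : Fin n) :
    LamMat lam m j * (LamMat lam m j)⁻¹ = 1 := by
  apply Matrix.mul_nonsing_inv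
  have htri : (LamMat lam m j).BlockTriangular OrderDual.toDual := by
    intro i s h
    have h' : i < s := h
    have hns : ¬ ((s : ℕ) ≤ (i : ℕ)) := not_le.mpr h'
    simp only [LamMat, Matrix.of_apply, if_neg hns]
  rw [Matrix.det_of_lowerTriangular _ htri]
  have hdiag : ∀ i : Fin (m j), LamMat lam m j i i = 1 := fun i => by
    simp [LamMat, Lpoly_eval_self lam m hlam j]
  simp [hdiag]

end Aux

theorem hermite_interpolation_closed_form
    {k : Type*} [Field k] [CharZero k] {n : ℕ}
    (lam : Fin n → k) (hlam : Function.Injective lam)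
    (m : Fin n → ℕ) (hm : ∀ i, 0 < m i)
    (a : ∀ j : Fin n, Fin (m j) → k) :
    let r : Polynomial k :=
      ∑ j, ∑ i : Fin (m j),
        C (((LamMat lam m j)⁻¹).mulVec (fun s => a j s) i) *
          (C (((i : ℕ).factorial : k)⁻¹) * (X - C (lam j)) ^ (i : ℕ) * Lpoly lam m j)
    r.degree < ((∑ i, m i : ℕ) : WithBot ℕ) ∧
      ∀ (j : Fin n) (i : Fin (m j)),
        (Polynomial.derivative^[(i : ℕ)] r).eval (lam j) = a j i := by
  intro r
  have hN : (⊥ : WithBot ℕ) < ((∑ i, m i : ℕ) : WithBot ℕ) := bot_lt_iff_ne_bot.mpr (by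
    exact_mod_cast (WithBot.coe_ne_bot))
  constructor
  · -- degree bound
    refine lt_of_le_of_lt (degree_sum_le _ _) ?_
    rw [Finset.sup_lt_iff hN]
    intro j _
    refine lt_of_le_of_lt (degree_sum_le _ _) ?_
    rw [Finset.sup_lt_iff hN]
    intro i _
    refine lt_of_le_of_lt (degree_le_natDegree) ?_
    rw [Nat.cast_lt]
    have hL : (Lpoly lam m j).natDegree ≤ ∑ t ∈ Finset.univ.erase j, m t := by
      refine le_trans (natDegree_prod_le _ _) (Finset.sum_le_sum fun t _ => ?_)
      refine le_trans (natDegree_mul_le) ?_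
      simp [natDegree_pow]
    have h1 : (C (((LamMat lam m j)⁻¹).mulVec (fun s => a j s) i) *
          (C (((i : ℕ).factorial : k)⁻¹) * (X - C (lam j)) ^ (i : ℕ) * Lpoly lam m j)).natDegree
        ≤ (i : ℕ) + (Lpoly lam m j).natDegree := by
      refine le_trans (natDegree_mul_le) ?_
      refine le_trans (Nat.add_le_add_left (natDegree_mul_le) _) ?_
      refine le_trans (Nat.add_le_add_left (Nat.add_le_add_right (natDegree_mul_le) _) _) ?_
      simp [natDegree_pow]
    have hsum : ∑ t, m t = m j + ∑ t ∈ Finset.univ.erase j, m t :=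
      (Finset.add_sum_erase _ _ (Finset.mem_univ j)).symm
    have := i.2
    omega
  · intro j i'
    have hr : derivative^[(i' : ℕ)] r =
        ∑ t, ∑ i : Fin (m t), derivative^[(i' : ℕ)]
          (C (((LamMat lam m t)⁻¹).mulVec (fun s => a t s) i) *
            (C (((i : ℕ).factorial : k)⁻¹) * (X - C (lam t)) ^ (i : ℕ) * Lpoly lam m t)) := by
      rw [iterate_derivative_sum]
      exact Finset.sum_congr rfl fun t _ => iterate_derivative_sum _ _ _
    rw [hr, eval_finset_sum]
    rw [Finset.sum_eq_single_of_mem j (Finset.mem_univ j)]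
    · rw [eval_finset_sum]
      have key : ∀ i : Fin (m j),
          (derivative^[(i' : ℕ)] (C (((LamMat lam m j)⁻¹).mulVec (fun s => a j s) i) *
            (C (((i : ℕ).factorial : k)⁻¹) * (X - C (lam j)) ^ (i : ℕ) * Lpoly lam m j))).eval
              (lam j)
          = LamMat lam m j i' i * ((LamMat lam m j)⁻¹).mulVec (fun s => a j s) i := by
        intro i
        rw [iterate_derivative_C_mul, eval_mul, eval_C, eval_basis_self]
        simp only [LamMat, Matrix.of_apply]
        exact mul_comm _ _
      rw [Finset.sum_congr rfl fun i _ => key i]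
      have : ∑ i : Fin (m j), LamMat lam m j i' i * ((LamMat lam m j)⁻¹).mulVec (fun s => a j s) i
          = (LamMat lam m j).mulVec (((LamMat lam m j)⁻¹).mulVec (fun s => a j s)) i' := rfl
      rw [this, Matrix.mulVec_mulVec, LamMat_mul_inv lam m hlam j, Matrix.one_mulVec]
    · intro t _ ht
      rw [eval_finset_sum]
      refine Finset.sum_eq_zero fun i _ => ?_
      have heq : C (((LamMat lam m t)⁻¹).mulVec (fun s => a t s) i) *
            (C (((i : ℕ).factorial : k)⁻¹) * (X - C (lam t)) ^ (i : ℕ) * Lpoly lam m t)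
          = C ((((LamMat lam m t)⁻¹).mulVec (fun s => a t s) i) * ((i : ℕ).factorial : k)⁻¹) *
            (X - C (lam t)) ^ (i : ℕ) * Lpoly lam m t := by
        rw [C_mul]; ring
      rw [heq]
      exact eval_basis_ne lam m t j (Ne.symm ht) _ _ i'.2
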